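/- Let θ > 1, Z_k = θ^k + Σ_{j=0}^{k−1} θ^{j+1}, and ρ(θ) = 2 + 1/(θ−1). Then for all 0 ≤ k < l one has Z_k·Z_{l−k}/Z_l ≤ min( ρ(θ)²/2 , (ρ(θ)²/(l+1))·θ^{l−1} , (l+2)²/8 , ((l+2)/2)·θ^{l−1} ). -/
import Mathlib


/-- Normalizing constant of the branching example: Z_k = θ^k + Σ_{j=0}^{k-1} θ^{j+1}. -/
noncomputable def Zb (θ : ℝ) (k : ℕ) : ℝ := θ^k + ∑ j ∈ Finset.range k, θ^(j+1)

lemma Zb_pos {θ : ℝ} (hθ : 1 < θ) (k : ℕ) : 0 < Zb θ k := by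
  have h0 : (0:ℝ) < θ := by linarith
  have h1 : 0 ≤ ∑ j ∈ Finset.range k, θ^(j+1) :=
    Finset.sum_nonneg fun j _ => (pow_pos h0 _).le
  have h2 : 0 < θ^k := pow_pos h0 k
  unfold Zb; linarith

lemma Zb_le_rho {θ : ℝ} (hθ : 1 < θ) (k : ℕ) :
    Zb θ k ≤ (2 + 1/(θ-1)) * θ^k := by
  have hθ1 : (0:ℝ) < θ - 1 := by linarith
  have h0 : (0:ℝ) < θ := by linarith
  have hgeom : ∑ j ∈ Finset.range k, θ^(j+1) = θ * ((θ^k - 1)/(θ-1)) := by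
    have hg := geom_sum_eq (by linarith : θ ≠ 1) k
    calc ∑ j ∈ Finset.range k, θ^(j+1) = θ * ∑ j ∈ Finset.range k, θ^j := by
          rw [Finset.mul_sum]; exact Finset.sum_congr rfl fun j _ => by ring
      _ = θ * ((θ^k - 1)/(θ-1)) := by rw [hg]
  unfold Zb
  rw [hgeom]
  have hp : 0 < θ^k := pow_pos h0 k
  have key : (2 + 1/(θ-1)) * θ^k - (θ^k + θ * ((θ^k - 1)/(θ-1))) = θ/(θ-1) := by
    field_simp
    ring
  have hpos : 0 < θ/(θ-1) := by positivity
  linarith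

lemma Zb_le_card {θ : ℝ} (hθ : 1 < θ) (k : ℕ) :
    Zb θ k ≤ ((k:ℝ)+1) * θ^k := by
  have h0 : (0:ℝ) < θ := by linarith
  have h1 : ∑ j ∈ Finset.range k, θ^(j+1) ≤ ∑ _j ∈ Finset.range k, θ^k :=
    Finset.sum_le_sum fun j hj =>
      pow_le_pow_right₀ hθ.le (Nat.succ_le_of_lt (Finset.mem_range.mp hj))
  have h2 : ∑ _j ∈ Finset.range k, θ^k = (k:ℝ) * θ^k := by
    rw [Finset.sum_const, Finset.card_range, nsmul_eq_mul]
  unfold Zb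
  rw [h2] at h1
  linarith

lemma Zb_shift {θ : ℝ} (hθ : 1 < θ) (k m : ℕ) :
    θ^k * Zb θ m ≤ Zb θ (k+m) := by
  have h0 : (0:ℝ) < θ := by linarith
  unfold Zb
  rw [mul_add, ← pow_add, Finset.mul_sum]
  have h1 : ∑ j ∈ Finset.range m, θ^k * θ^(j+1)
      = ∑ i ∈ Finset.Ico k (k+m), θ^(i+1) := by
    rw [Finset.sum_Ico_eq_sum_range]
    simp only [Nat.add_sub_cancel_left]
    exact Finset.sum_congr rfl fun j _ => by rw [← pow_add]; ring_nf
  have h2 : ∑ i ∈ Finset.Ico k (k+m), θ^(i+1) ≤ ∑ i ∈ Finset.range (k+m), θ^(i+1) := by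
    rw [Finset.range_eq_Ico]
    exact Finset.sum_le_sum_of_subset_of_nonneg
      (Finset.Ico_subset_Ico (Nat.zero_le k) le_rfl)
      (fun i _ _ => (pow_pos h0 _).le)
  rw [h1]
  linarith

lemma Zb_ge_two {θ : ℝ} (hθ : 1 < θ) (l : ℕ) (hl : 1 ≤ l) :
    2 * θ^l ≤ Zb θ l := by
  have h0 : (0:ℝ) < θ := by linarith
  have hmem : l - 1 ∈ Finset.range l := Finset.mem_range.mpr (by omega)
  have h1 : θ^((l-1)+1) ≤ ∑ j ∈ Finset.range l, θ^(j+1) :=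
    Finset.single_le_sum (f := fun j => θ^(j+1)) (fun j _ => (pow_pos h0 _).le) hmem
  have h2 : (l-1)+1 = l := by omega
  rw [h2] at h1
  unfold Zb
  linarith

lemma rho_pow_ge {θ : ℝ} (hθ : 1 < θ) (l : ℕ) (hl : 1 ≤ l) :
    ((l:ℝ)+1) ≤ (2 + 1/(θ-1)) * θ^(l-1) := by
  have hθ1 : (0:ℝ) < θ - 1 := by linarith
  have hb : 1 + ((l-1 : ℕ):ℝ) * (θ-1) ≤ θ^(l-1) := by
    have := one_add_mul_le_pow (by linarith : (-2:ℝ) ≤ θ - 1) (l-1)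
    simpa using this
  have hc : ((l-1 : ℕ):ℝ) = (l:ℝ) - 1 := by
    have : ((l:ℝ)) ≥ 1 := by exact_mod_cast hl
    push_cast [hl]; ring
  rw [hc] at hb
  have hi : 0 < 1/(θ-1) := by positivity
  have hhi : (θ-1) * (1/(θ-1)) = 1 := by field_simp
  have hρ : 0 < 2 + 1/(θ-1) := by linarith
  have hn : (0:ℝ) ≤ (l:ℝ) - 1 := by
    have : (1:ℝ) ≤ (l:ℝ) := by exact_mod_cast hl
    linarith
  nlinarith [mul_le_mul_of_nonneg_left hb hρ.le, mul_nonneg hn hθ1.le,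
    mul_nonneg (mul_nonneg hn hθ1.le) hi.le]

/- Upper bound on ‖q_{k,l}(1)‖_k = Z_k·Z_{l-k}/Z_l in the branching example
   (Corollary 3.13 of the paper), with ρ(θ) = 2 + 1/(θ-1). -/
set_option maxHeartbeats 1000000 in
theorem stmt_8 (θ : ℝ) (hθ : 1 < θ) (k l : ℕ) (hkl : k < l) :
    Zb θ k * Zb θ (l - k) / Zb θ l
      ≤ min (min ((2 + 1/(θ-1))^2 / 2)
               ((2 + 1/(θ-1))^2 / ((l:ℝ)+1) * θ^(l-1)))
            (min (((l:ℝ)+2)^2 / 8)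
               ((((l:ℝ)+2) / 2) * θ^(l-1))) := by
  have h0 : (0:ℝ) < θ := by linarith
  have hθ1 : (0:ℝ) < θ - 1 := by linarith
  set m := l - k with hm
  have hkm : k + m = l := by omega
  have hl1 : 1 ≤ l := by omega
  have hZl : 0 < Zb θ l := Zb_pos hθ l
  have hZk : 0 < Zb θ k := Zb_pos hθ k
  have hZm : 0 < Zb θ m := Zb_pos hθ m
  set ρ := 2 + 1/(θ-1) with hρdef
  have hρ2 : (2:ℝ) ≤ ρ := by
    have : 0 < 1/(θ-1) := by positivity
    rw [hρdef]; linarith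
  have hρ0 : (0:ℝ) < ρ := by linarith
  have hbern : ((l:ℝ)+1) ≤ ρ * θ^(l-1) := by
    rw [hρdef]; exact rho_pow_ge hθ l hl1
  have hrho_k : Zb θ k ≤ ρ * θ^k := by rw [hρdef]; exact Zb_le_rho hθ k
  clear_value m ρ
  have hmr : (k:ℝ) + (m:ℝ) = (l:ℝ) := by exact_mod_cast hkm
  -- LHS*Zl bounds
  have hA : Zb θ k * Zb θ m ≤ ρ * Zb θ l := by
    calc Zb θ k * Zb θ m ≤ (ρ * θ^k) * Zb θ m :=
          mul_le_mul_of_nonneg_right hrho_k hZm.le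
      _ = ρ * (θ^k * Zb θ m) := by ring
      _ ≤ ρ * Zb θ (k+m) :=
          mul_le_mul_of_nonneg_left (Zb_shift hθ k m) hρ0.le
      _ = ρ * Zb θ l := by rw [hkm]
  have hBk : Zb θ k * Zb θ m ≤ ((k:ℝ)+1) * Zb θ l := by
    calc Zb θ k * Zb θ m ≤ (((k:ℝ)+1) * θ^k) * Zb θ m :=
          mul_le_mul_of_nonneg_right (Zb_le_card hθ k) hZm.le
      _ = ((k:ℝ)+1) * (θ^k * Zb θ m) := by ring
      _ ≤ ((k:ℝ)+1) * Zb θ (k+m) :=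
          mul_le_mul_of_nonneg_left (Zb_shift hθ k m) (by positivity)
      _ = ((k:ℝ)+1) * Zb θ l := by rw [hkm]
  have hBm : Zb θ k * Zb θ m ≤ ((m:ℝ)+1) * Zb θ l := by
    calc Zb θ k * Zb θ m = Zb θ m * Zb θ k := by ring
      _ ≤ (((m:ℝ)+1) * θ^m) * Zb θ k :=
          mul_le_mul_of_nonneg_right (Zb_le_card hθ m) hZk.le
      _ = ((m:ℝ)+1) * (θ^m * Zb θ k) := by ring
      _ ≤ ((m:ℝ)+1) * Zb θ (m+k) :=
          mul_le_mul_of_nonneg_left (Zb_shift hθ m k) (by positivity)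
      _ = ((m:ℝ)+1) * Zb θ l := by rw [Nat.add_comm m k, hkm]
  have h2l : 2 * θ^l ≤ Zb θ l := Zb_ge_two hθ l hl1
  have hC : Zb θ k * Zb θ m ≤ ((k:ℝ)+1) * ((m:ℝ)+1) / 2 * Zb θ l := by
    have h1 : Zb θ k * Zb θ m ≤ ((k:ℝ)+1) * ((m:ℝ)+1) * θ^l := by
      calc Zb θ k * Zb θ m ≤ (((k:ℝ)+1) * θ^k) * (((m:ℝ)+1) * θ^m) :=
            mul_le_mul (Zb_le_card hθ k) (Zb_le_card hθ m) hZm.le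
              (by positivity)
        _ = ((k:ℝ)+1) * ((m:ℝ)+1) * (θ^k * θ^m) := by ring
        _ = ((k:ℝ)+1) * ((m:ℝ)+1) * θ^l := by rw [← pow_add, hkm]
    nlinarith [mul_nonneg (mul_nonneg (by positivity : (0:ℝ) ≤ (k:ℝ)+1)
        (by positivity : (0:ℝ) ≤ (m:ℝ)+1)) (by linarith : (0:ℝ) ≤ Zb θ l - 2*θ^l)]
  have hθp : (1:ℝ) ≤ θ^(l-1) := by
    have := pow_le_pow_right₀ hθ.le (Nat.zero_le (l-1))
    simpa using this
  refine le_min (le_min ?_ ?_) (le_min ?_ ?_) <;> rw [div_le_iff₀ hZl]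
  · -- ρ^2/2
    nlinarith [mul_nonneg (mul_nonneg (by linarith : (0:ℝ) ≤ ρ - 2) hZl.le) hρ0.le]
  · -- ρ^2/(l+1) * θ^(l-1)
    have hlp : (0:ℝ) < (l:ℝ)+1 := by positivity
    have hρle : ρ ≤ ρ^2 / ((l:ℝ)+1) * θ^(l-1) := by
      rw [div_mul_eq_mul_div, le_div_iff₀ hlp]
      nlinarith [mul_nonneg hρ0.le (sub_nonneg.mpr hbern)]
    calc Zb θ k * Zb θ m ≤ ρ * Zb θ l := hA
      _ ≤ (ρ^2 / ((l:ℝ)+1) * θ^(l-1)) * Zb θ l :=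
          mul_le_mul_of_nonneg_right hρle hZl.le
  · -- (l+2)^2/8
    have key : ((k:ℝ)+1) * ((m:ℝ)+1) / 2 ≤ ((l:ℝ)+2)^2/8 := by
      rw [← hmr]
      nlinarith [sq_nonneg ((k:ℝ) - (m:ℝ))]
    calc Zb θ k * Zb θ m ≤ ((k:ℝ)+1) * ((m:ℝ)+1) / 2 * Zb θ l := hC
      _ ≤ ((l:ℝ)+2)^2/8 * Zb θ l := mul_le_mul_of_nonneg_right key hZl.le
  · -- (l+2)/2 * θ^(l-1)
    have hh : (0:ℝ) ≤ ((l:ℝ)+2)/2 := by positivity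
    have hkey : ((l:ℝ)+2)/2 * Zb θ l ≤ (((l:ℝ)+2)/2 * θ^(l-1)) * Zb θ l := by
      nlinarith [mul_nonneg (mul_nonneg hh (sub_nonneg.mpr hθp)) hZl.le]
    rcases le_total k m with hkm2 | hkm2
    · have hk2 : ((k:ℝ)+1) ≤ ((l:ℝ)+2)/2 := by
        have : (k:ℝ) ≤ (m:ℝ) := Nat.cast_le.mpr hkm2
        linarith
      calc Zb θ k * Zb θ m ≤ ((k:ℝ)+1) * Zb θ l := hBk
        _ ≤ ((l:ℝ)+2)/2 * Zb θ l := mul_le_mul_of_nonneg_right hk2 hZl.le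
        _ ≤ (((l:ℝ)+2)/2 * θ^(l-1)) * Zb θ l := hkey
    · have hk2 : ((m:ℝ)+1) ≤ ((l:ℝ)+2)/2 := by
        have : (m:ℝ) ≤ (k:ℝ) := Nat.cast_le.mpr hkm2
        linarith
      calc Zb θ k * Zb θ m ≤ ((m:ℝ)+1) * Zb θ l := hBm
        _ ≤ ((l:ℝ)+2)/2 * Zb θ l := mul_le_mul_of_nonneg_right hk2 hZl.le
        _ ≤ (((l:ℝ)+2)/2 * θ^(l-1)) * Zb θ l := hkey
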